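/- For any nonzero partition P, the difficulty satisfies δ(P) ≥ 2·P_0 − |P|, where P_0 is the largest part and |P| is the sum of the parts. -/
import Mathlib


open scoped Classical

/-- A partition: weakly decreasing, eventually zero sequence of nonnegative integers. -/
def IsPartition (P : ℕ → ℕ) : Prop :=
  (∀ i, P (i + 1) ≤ P i) ∧ ∃ N, ∀ n ≥ N, P n = 0

/-- An arithmetic progression: a proper subset of ℤ whose set of differences is
closed under addition. -/
def IsAP (Λ : Set ℤ) : Prop :=
  Λ ≠ Set.univ ∧
    ∀ a b c d : ℤ, a ∈ Λ → b ∈ Λ → c ∈ Λ → d ∈ Λ →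
      ∃ x ∈ Λ, ∃ y ∈ Λ, x - y = (a - b) + (c - d)

/-- Upward displacement of a partition with respect to an arithmetic progression.
The convention `P_{-1} = ∞` is encoded by the disjunct `i = 0`. -/
noncomputable def upDisp (P : ℕ → ℕ) (Λ : Set ℤ) : ℕ → ℕ :=
  fun i => if ((P i : ℤ) - i) ∈ Λ ∧ (i = 0 ∨ P i < P (i - 1)) then P i + 1 else P i

/-- Downward displacement of a partition with respect to an arithmetic progression. -/
noncomputable def downDisp (P : ℕ → ℕ) (Λ : Set ℤ) : ℕ → ℕ :=
  fun i => if ((P i : ℤ) - i - 1) ∈ Λ ∧ P (i + 1) < P i then P i - 1 else P i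

/-- The sum `|P|` of the parts of a partition. -/
noncomputable def psum (P : ℕ → ℕ) : ℕ := ∑ᶠ i, P i

/-- Two partitions are linked if some arithmetic progression displaces one to the other. -/
def Linked (P Q : ℕ → ℕ) : Prop :=
  ∃ Λ : Set ℤ, IsAP Λ ∧ Q = upDisp P Λ ∧ P = downDisp Q Λ

/-- `k`-linked: linked with sums differing by `k`. -/
def KLinked (k : ℕ) (P Q : ℕ → ℕ) : Prop :=
  Linked P Q ∧ psum Q = psum P + k

/-- A valid sequence of partitions: adjacent pairs are 1-linked or 2-linked. -/
def ValidSeq (n : ℕ) (s : ℕ → ℕ → ℕ) : Prop :=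
  (∀ j ≤ n, IsPartition (s j)) ∧
    ∀ j < n, KLinked 1 (s j) (s (j + 1)) ∨ KLinked 2 (s j) (s (j + 1))

/-- The difficulty `δ(P)`: the least number of 1-linked adjacent pairs in a valid
sequence from the empty partition to `P`. -/
noncomputable def delta (P : ℕ → ℕ) : ℕ :=
  sInf { c | ∃ n s, ValidSeq n s ∧ s 0 = (fun _ => 0) ∧ s n = P ∧
    c = ((Finset.range n).filter fun j => KLinked 1 (s j) (s (j + 1))).card }

/-- The conjugate (dual) partition: `P*_n = #{m : P_m > n}`. -/
noncomputable def conj (P : ℕ → ℕ) : ℕ → ℕ := fun n => Set.ncard { m | n < P m }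
lemma psum_eq_sum (P : ℕ → ℕ) (N : ℕ) (h : ∀ n ≥ N, P n = 0) :
    psum P = ∑ i ∈ Finset.range N, P i := by
  apply finsum_eq_sum_of_support_subset
  intro x hx
  simp only [Function.mem_support] at hx
  simp only [Finset.coe_range, Set.mem_Iio]
  by_contra h'
  exact hx (h x (le_of_not_gt h'))

lemma part_mono (P : ℕ → ℕ) (hP : ∀ i, P (i + 1) ≤ P i) :
    ∀ j k, j ≤ k → P k ≤ P j := by
  intro j k hjk
  induction k with
  | zero => simp_all [Nat.le_zero.mp hjk]
  | succ m ih =>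
    rcases Nat.lt_or_ge j (m+1) with h | h
    · exact le_trans (hP m) (ih (by omega))
    · have : j = m + 1 := by omega
      simp [this]

lemma klinked_add (P : ℕ → ℕ) (hP : IsPartition P) (i : ℕ)
    (hadd : i = 0 ∨ P i < P (i - 1)) :
    KLinked 1 P (Function.update P i (P i + 1)) := by
  obtain ⟨hmono, N, hN⟩ := hP
  have mono := part_mono P hmono
  set t : ℤ := (P i : ℤ) - i with ht
  set Λ : Set ℤ := {t} with hΛ
  set Q : ℕ → ℕ := Function.update P i (P i + 1) with hQ
  have hQapp : ∀ j, Q j = if j = i then P i + 1 else P j := by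
    intro j; simp [hQ, Function.update_apply]
  -- strict decrease of diagonal
  have diag : ∀ j k : ℕ, j < k → (P k : ℤ) - k ≤ (P j : ℤ) - j - (k - j) := by
    intro j k hjk
    have := mono j k (le_of_lt hjk)
    have : (P k : ℤ) ≤ P j := by exact_mod_cast this
    omega
  constructor
  · refine ⟨Λ, ⟨?_, ?_⟩, ?_, ?_⟩
    · intro h
      have : (t + 1) ∈ Λ := h ▸ Set.mem_univ _
      simp [hΛ] at this
    · intro a b c d ha hb hc hd
      simp only [hΛ, Set.mem_singleton_iff] at ha hb hc hd
      exact ⟨t, rfl, t, rfl, by subst ha hb hc hd; ring⟩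
    · funext j
      rw [hQapp j]
      by_cases hj : j = i
      · subst hj
        simp [upDisp, hΛ, hadd, ht]
      · have hne : (P j : ℤ) - j ≠ t := by
          rcases Nat.lt_or_ge j i with h | h
          · have := diag j i h; omega
          · have := diag i j (by omega); omega
        simp [upDisp, hΛ, hne, hj]
    · funext j
      by_cases hj : j = i
      · subst hj
        have h1 : ((Q j : ℤ)) - j - 1 = t := by
          rw [hQapp, if_pos rfl]; push_cast; ring
        have h2 : Q (j + 1) < Q j := by
          rw [hQapp, hQapp]
          rw [if_neg (by omega : j + 1 ≠ j), if_pos rfl]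
          exact lt_of_le_of_lt (hmono j) (by omega)
        have hcond : ((Q j : ℤ) - j - 1) ∈ Λ ∧ Q (j + 1) < Q j :=
          ⟨by rw [hΛ, Set.mem_singleton_iff]; exact h1, h2⟩
        show P j = downDisp Q Λ j
        simp only [downDisp, if_pos hcond]
        rw [hQapp, if_pos rfl]
        omega
      · -- membership fails
        have hne : ((Q j : ℤ)) - j - 1 ≠ t := by
          rw [hQapp, if_neg hj]
          rcases Nat.lt_or_ge j i with h | h
          · -- j < i, so i ≠ 0 and P i < P (i-1)
            have hi0 : i ≠ 0 := by omega
            have hlt : P i < P (i - 1) := hadd.resolve_left hi0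
            have hcast : ((P (i-1) : ℤ)) ≥ (P i : ℤ) + 1 := by exact_mod_cast hlt
            rcases Nat.lt_or_ge j (i-1) with h2 | h2
            · have h3 := diag j (i-1) h2
              have h4 : (i:ℤ) - 1 = ((i - 1 : ℕ) : ℤ) := by omega
              omega
            · have hj' : j = i - 1 := by omega
              rw [hj']
              omega
          · have := diag i j (by omega); omega
        have hcond : ¬ (((Q j : ℤ) - j - 1) ∈ Λ ∧ Q (j + 1) < Q j) := by
          rw [hΛ, Set.mem_singleton_iff]
          exact fun h => hne h.1
        show P j = downDisp Q Λ j
        simp only [downDisp, if_neg hcond]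
        rw [hQapp, if_neg hj]
  · -- psum
    have hM : ∀ n ≥ max N (i+1), P n = 0 := fun n hn => hN n (le_trans (le_max_left _ _) hn)
    have hMQ : ∀ n ≥ max N (i+1), Q n = 0 := by
      intro n hn
      rw [hQapp, if_neg (by omega : n ≠ i)]
      exact hM n hn
    rw [psum_eq_sum Q _ hMQ, psum_eq_sum P _ hM]
    have hc : ∀ j ∈ Finset.range (max N (i+1)), Q j = P j + (if j = i then 1 else 0) := by
      intro j _
      rw [hQapp]
      by_cases h : j = i
      · subst h; simp
      · simp [h]
    rw [Finset.sum_congr rfl hc, Finset.sum_add_distrib,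
      Finset.sum_ite_eq' (Finset.range (max N (i+1))) i (fun _ => 1)]
    rw [if_pos (Finset.mem_range.mpr (by omega))]


/-- Every partition is reachable from the empty partition by a valid sequence. -/
lemma reachable (m : ℕ) : ∀ P : ℕ → ℕ, IsPartition P → psum P = m →
    ∃ n s, ValidSeq n s ∧ s 0 = (fun _ => 0) ∧ s n = P := by
  induction m using Nat.strong_induction_on with
  | _ m IH =>
    intro P hP hm
    obtain ⟨hmono, N, hN⟩ := hP
    by_cases hz : ∀ i, P i = 0
    · refine ⟨0, fun _ => P, ⟨?_, ?_⟩, ?_, rfl⟩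
      · intro j _; exact ⟨hmono, N, hN⟩
      · intro j hj; omega
      · funext i; exact hz i
    · push_neg at hz
      -- largest nonzero index
      set i := Nat.findGreatest (fun k => P k ≠ 0) N with hi
      obtain ⟨k, hk⟩ := hz
      have hkN : k ≤ N := by
        by_contra h
        exact hk (hN k (by omega))
      have hPi : P i ≠ 0 := Nat.findGreatest_spec (P := fun k => P k ≠ 0) hkN hk
      have hgt : ∀ l, i < l → P l = 0 := by
        intro l hl
        by_cases hlN : l ≤ N
        · by_contra h
          exact absurd hl (not_lt.mpr (Nat.le_findGreatest hlN h))
        · exact hN l (by omega)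
      set P' := Function.update P i (P i - 1) with hP'
      have hP'app : ∀ j, P' j = if j = i then P i - 1 else P j := by
        intro j; simp [hP', Function.update_apply]
      have hP'part : IsPartition P' := by
        constructor
        · intro j
          rw [hP'app, hP'app]
          by_cases h1 : j + 1 = i
          · rw [if_pos h1, if_neg (by omega)]
            have := hmono j
            rw [h1] at this
            omega
          · rw [if_neg h1]
            by_cases h2 : j = i
            · rw [if_pos h2]
              have : P (j+1) = 0 := hgt (j+1) (by omega)
              omega
            · rw [if_neg h2]; exact hmono j
        · exact ⟨max N (i+1), fun n hn => by
            rw [hP'app, if_neg (by omega : n ≠ i)]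
            exact hN n (le_trans (le_max_left N (i+1)) hn)⟩
      have hadd' : i = 0 ∨ P' i < P' (i - 1) := by
        by_cases h : i = 0
        · exact Or.inl h
        · refine Or.inr ?_
          rw [hP'app, hP'app, if_pos rfl, if_neg (by omega : i - 1 ≠ i)]
          have h1 := hmono (i - 1)
          have h2 : i - 1 + 1 = i := by omega
          rw [h2] at h1
          omega
      have hPQ : P = Function.update P' i (P' i + 1) := by
        funext j
        rw [Function.update_apply]
        by_cases h : j = i
        · rw [if_pos h, hP'app i, if_pos rfl, h]
          omega
        · rw [if_neg h, hP'app j, if_neg h]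
      have hkl : KLinked 1 P' P := by
        have := klinked_add P' hP'part i hadd'
        rwa [← hPQ] at this
      have hsum' : psum P' < m := by
        have := hkl.2
        omega
      obtain ⟨n, s, ⟨hs1, hs2⟩, hs0, hsn⟩ := IH (psum P') hsum' P' hP'part rfl
      set s' : ℕ → ℕ → ℕ := fun j => if j ≤ n then s j else P with hs'def
      have hs'app : ∀ j, s' j = if j ≤ n then s j else P := fun _ => rfl
      refine ⟨n + 1, s', ⟨?_, ?_⟩, ?_, ?_⟩
      · intro j hj
        rw [hs'app j]
        by_cases h : j ≤ n
        · rw [if_pos h]; exact hs1 j h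
        · rw [if_neg h]; exact ⟨hmono, N, hN⟩
      · intro j hj
        rw [hs'app j, hs'app (j+1)]
        by_cases h : j < n
        · rw [if_pos (by omega : j ≤ n), if_pos (by omega : j + 1 ≤ n)]
          exact hs2 j h
        · have hjn : j = n := by omega
          rw [if_pos (by omega : j ≤ n), if_neg (by omega : ¬ j + 1 ≤ n), hjn, hsn]
          exact Or.inl hkl
      · rw [hs'app 0, if_pos (by omega : 0 ≤ n)]; exact hs0
      · rw [hs'app (n+1), if_neg (by omega : ¬ n + 1 ≤ n)]

lemma step_zero_le (P Q : ℕ → ℕ) (h : Linked P Q) : Q 0 ≤ P 0 + 1 := by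
  obtain ⟨Λ, _, hQ, _⟩ := h
  rw [hQ]; unfold upDisp; split <;> omega

lemma psum_zero : psum (fun _ : ℕ => 0) = 0 := by
  unfold psum; exact finsum_zero


/-- Lower bound on the difficulty: `δ(P) ≥ 2 P_0 - |P|` for nonzero `P`. -/
theorem stmt4 (P : ℕ → ℕ) (hP : IsPartition P) (hne : ∃ i, P i ≠ 0) :
    (2 * (P 0 : ℤ) - psum P) ≤ delta P := by
  have hS : {c | ∃ n s, ValidSeq n s ∧ s 0 = (fun _ => 0) ∧ s n = P ∧
      c = ((Finset.range n).filter fun j => KLinked 1 (s j) (s (j + 1))).card}.Nonempty := by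
    obtain ⟨n, s, hv, h0, hn⟩ := reachable (psum P) P hP rfl
    exact ⟨_, n, s, hv, h0, hn, rfl⟩
  have hmem := Nat.sInf_mem hS
  obtain ⟨n, s, ⟨hs1, hs2⟩, h0, hn, hc⟩ := hmem
  have hA : ∀ j, j ≤ n → s j 0 ≤ j := by
    clear hc hS
    intro j
    induction j with
    | zero => intro _; rw [h0]
    | succ k ih =>
      intro hj
      have hk := ih (by omega)
      have hl : Linked (s k) (s (k+1)) := by
        rcases hs2 k (by omega) with h | h
        exacts [h.1, h.1]
      have := step_zero_le _ _ hl
      omega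
  have hB : ∀ j, j ≤ n →
      (psum (s j) : ℤ) +
        ((Finset.range j).filter fun l => KLinked 1 (s l) (s (l + 1))).card = 2 * j := by
    clear hc hS
    intro j
    induction j with
    | zero => intro _; simp [h0, psum_zero]
    | succ k ih =>
      intro hj
      have hk := ih (by omega)
      have hstep := hs2 k (by omega)
      have hfil : ((Finset.range (k+1)).filter fun l => KLinked 1 (s l) (s (l + 1))).card
          = ((Finset.range k).filter fun l => KLinked 1 (s l) (s (l + 1))).card
            + (if KLinked 1 (s k) (s (k+1)) then 1 else 0) := by
        rw [Finset.range_add_one, Finset.filter_insert]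
        by_cases h1 : KLinked 1 (s k) (s (k+1))
        · rw [if_pos h1, if_pos h1, Finset.card_insert_of_notMem (by simp)]
        · rw [if_neg h1, if_neg h1]
          omega
      by_cases h1 : KLinked 1 (s k) (s (k+1))
      · have hp := h1.2
        rw [hfil, if_pos h1]
        push_cast
        push_cast at hk
        omega
      · have h2 := hstep.resolve_left h1
        have hp := h2.2
        rw [hfil, if_neg h1]
        push_cast
        push_cast at hk
        omega
  have hAn := hA n le_rfl
  have hBn := hB n le_rfl
  rw [hn] at hAn hBn
  unfold delta
  rw [hc]
  clear hc hS
  omega
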